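/- Let Ω ⊆ ℂⁿ be open and let (g_j)_{j≥1} be a sequence of holomorphic functions on Ω such that the series Σ_{j=1}^{∞} |g_j(z)|² converges for every z ∈ Ω and its sum is bounded on every compact subset of Ω. Let Ω' = {w ∈ ℂⁿ : w̄ ∈ Ω} and for each j define f_j : Ω × Ω' → ℂ by f_j(z,w) = g_j(z) · conj(g_j(w̄)). Then each f_j is holomorphic on Ω × Ω', the series Σ_{j=1}^{∞} f_j converges uniformly on every compact subset of Ω × Ω', and the sum F is holomorphic on Ω × Ω' and satisfies F(z, z̄) = Σ_{j=1}^{∞} |g_j(z)|² for every z ∈ Ω. -/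

import Mathlib

open Set Filter

/-- Coordinatewise complex conjugation `w ↦ w̄` on `ℂⁿ`. -/
noncomputable def conjVec {n : ℕ} (w : EuclideanSpace ℂ (Fin n)) : EuclideanSpace ℂ (Fin n) :=
  (WithLp.equiv 2 (Fin n → ℂ)).symm fun i => starRingEnd ℂ (w i)

open Metric

section schwarz
variable {V : Type*} [NormedAddCommGroup V] [NormedSpace ℂ V]

lemma line_diff {f : V → ℂ} {c : V} {R : ℝ} (hd : DifferentiableOn ℂ f (ball c R))
    {v : V} (hv : v ≠ 0) :
    DifferentiableOn ℂ (fun t : ℂ => f (c + t • v)) (ball (0:ℂ) (R / ‖v‖)) := by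
  have hmaps : MapsTo (fun t : ℂ => c + t • v) (ball (0:ℂ) (R / ‖v‖)) (ball c R) := by
    intro t ht
    simp only [mem_ball, dist_eq_norm] at ht ⊢
    have hv' : (0:ℝ) < ‖v‖ := norm_pos_iff.mpr hv
    calc ‖c + t • v - c‖ = ‖t‖ * ‖v‖ := by rw [add_sub_cancel_left, norm_smul]
    _ < (R / ‖v‖) * ‖v‖ := by
        simpa using (mul_lt_mul_of_pos_right (by simpa using ht) hv')
    _ = R := div_mul_cancel₀ _ hv'.ne'
  exact hd.comp (((differentiable_id.smul_const v).const_add c).differentiableOn) hmaps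

lemma line_mapsTo {f : V → ℂ} {c : V} {R C : ℝ}
    (hb : ∀ y ∈ ball c R, ‖f y‖ ≤ C) {v : V} (hv : v ≠ 0) (hR : 0 < R) {C' : ℝ} (hCC' : 2 * C < C') :
    MapsTo (fun t : ℂ => f (c + t • v)) (ball (0:ℂ) (R / ‖v‖))
      (ball (f (c + (0:ℂ) • v)) C') := by
  have hv' : (0:ℝ) < ‖v‖ := norm_pos_iff.mpr hv
  have hmem : ∀ t : ℂ, t ∈ ball (0:ℂ) (R / ‖v‖) → c + t • v ∈ ball c R := by
    intro t ht
    simp only [mem_ball, dist_eq_norm] at ht ⊢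
    calc ‖c + t • v - c‖ = ‖t‖ * ‖v‖ := by rw [add_sub_cancel_left, norm_smul]
    _ < (R / ‖v‖) * ‖v‖ := by
        simpa using (mul_lt_mul_of_pos_right (by simpa using ht) hv')
    _ = R := div_mul_cancel₀ _ hv'.ne'
  intro t ht
  have h0 : (0:ℂ) ∈ ball (0:ℂ) (R / ‖v‖) := by
    simpa using div_pos hR hv'
  have h1 : ‖f (c + t • v)‖ ≤ C := hb _ (hmem t ht)
  have h2 : ‖f (c + (0:ℂ) • v)‖ ≤ C := hb _ (hmem 0 h0)
  simp only [mem_ball, dist_eq_norm]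
  calc ‖f (c + t • v) - f (c + (0:ℂ) • v)‖ ≤ ‖f (c + t • v)‖ + ‖f (c + (0:ℂ) • v)‖ :=
        norm_sub_le _ _
  _ ≤ C + C := add_le_add h1 h2
  _ < C' := by linarith

lemma schwarz_dist {f : V → ℂ} {c : V} {R C : ℝ} (hR : 0 < R) (hC : 0 ≤ C)
    (hd : DifferentiableOn ℂ f (ball c R))
    (hb : ∀ y ∈ ball c R, ‖f y‖ ≤ C)
    {y : V} (hy : y ∈ ball c R) :
    ‖f y - f c‖ ≤ (2 * C + 1) / R * ‖y - c‖ := by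
  rcases eq_or_ne y c with rfl | hne
  · simp [div_nonneg, hR.le]
  have hv : y - c ≠ 0 := sub_ne_zero.mpr hne
  have hv' : (0:ℝ) < ‖y - c‖ := norm_pos_iff.mpr hv
  have hδ := line_diff hd hv
  have hm := line_mapsTo hb hv hR (C' := 2 * C + 1) (by linarith)
  have h1 : (1:ℂ) ∈ ball (0:ℂ) (R / ‖y - c‖) := by
    simp only [mem_ball, dist_zero_right, norm_one]
    rw [lt_div_iff₀ hv']
    rw [mem_ball, dist_eq_norm] at hy
    simpa using hy
  have := Complex.dist_le_div_mul_dist_of_mapsTo_ball hδ (hm.mono_right ball_subset_closedBall) h1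
  simp only [one_smul, zero_smul, add_zero, add_sub_cancel] at this
  rw [dist_eq_norm, dist_eq_norm] at this
  calc ‖f y - f c‖ ≤ (2 * C + 1) / (R / ‖y - c‖) * ‖(1:ℂ) - 0‖ := this
  _ = (2 * C + 1) / R * ‖y - c‖ := by
      rw [div_div_eq_mul_div]
      simp
      ring

lemma schwarz_fderiv {f : V → ℂ} {c : V} {R C : ℝ} (hR : 0 < R) (hC : 0 < C)
    (hd : DifferentiableOn ℂ f (ball c R))
    (hb : ∀ y ∈ ball c R, ‖f y‖ ≤ C) :
    ‖fderiv ℂ f c‖ ≤ 3 * C / R := by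
  have hc : c ∈ ball c R := mem_ball_self hR
  refine ContinuousLinearMap.opNorm_le_bound _ (by positivity) fun v => ?_
  rcases eq_or_ne v 0 with rfl | hv
  · simp
  have hv' : (0:ℝ) < ‖v‖ := norm_pos_iff.mpr hv
  have hδ := line_diff hd hv
  have hm := line_mapsTo hb hv hR (C' := 3 * C) (by linarith)
  have hρ : (0:ℝ) < R / ‖v‖ := div_pos hR hv'
  have hder : HasDerivAt (fun t : ℂ => f (c + t • v)) (fderiv ℂ f c v) 0 := by
    have hf : HasFDerivAt f (fderiv ℂ f c) c :=
      (hd.differentiableAt (isOpen_ball.mem_nhds hc)).hasFDerivAt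
    have hline : HasDerivAt (fun t : ℂ => c + t • v) v 0 := by
      simpa using ((hasDerivAt_id (0:ℂ)).smul_const v).const_add c
    have hf' : HasFDerivAt f (fderiv ℂ f c) (c + (0:ℂ) • v) := by simpa using hf
    exact hf'.comp_hasDerivAt (0:ℂ) hline
  have hb' := Complex.norm_deriv_le_div_of_mapsTo_ball hδ (hm.mono_right ball_subset_closedBall) hρ
  rw [hder.deriv] at hb'
  calc ‖fderiv ℂ f c v‖ ≤ 3 * C / (R / ‖v‖) := hb'
  _ = 3 * C / R * ‖v‖ := by rw [div_div_eq_mul_div]; ring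

end schwarz

section conjv
variable {n : ℕ}

lemma conjVec_apply (w : EuclideanSpace ℂ (Fin n)) (i : Fin n) :
    conjVec w i = starRingEnd ℂ (w i) := rfl

lemma conjVec_add (a b : EuclideanSpace ℂ (Fin n)) :
    conjVec (a + b) = conjVec a + conjVec b := by
  ext i
  simp [conjVec_apply, map_add]

lemma conjVec_smul (c : ℂ) (a : EuclideanSpace ℂ (Fin n)) :
    conjVec (c • a) = starRingEnd ℂ c • conjVec a := by
  ext i
  simp [conjVec_apply]

lemma conjVec_conjVec (w : EuclideanSpace ℂ (Fin n)) : conjVec (conjVec w) = w := by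
  ext i
  simp [conjVec_apply]

lemma conjVec_zero : conjVec (0 : EuclideanSpace ℂ (Fin n)) = 0 := by
  ext i
  simp [conjVec_apply]

lemma norm_conjVec (w : EuclideanSpace ℂ (Fin n)) : ‖conjVec w‖ = ‖w‖ := by
  rw [EuclideanSpace.norm_eq, EuclideanSpace.norm_eq]
  congr 1
  refine Finset.sum_congr rfl fun i _ => ?_
  rw [conjVec_apply, RCLike.norm_conj]

lemma continuous_conjVec : Continuous (conjVec : EuclideanSpace ℂ (Fin n) → _) := by
  have h1 : Continuous (WithLp.equiv 2 (Fin n → ℂ)) := PiLp.continuous_ofLp 2 _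
  have h2 : Continuous (WithLp.equiv 2 (Fin n → ℂ)).symm := PiLp.continuous_toLp 2 _
  exact h2.comp <| (continuous_pi fun i =>
    Complex.continuous_conj.comp ((continuous_apply i).comp h1))

/-- The conjugate-transpose of a continuous linear functional. -/
noncomputable def conjCLM (L : EuclideanSpace ℂ (Fin n) →L[ℂ] ℂ) :
    EuclideanSpace ℂ (Fin n) →L[ℂ] ℂ :=
  LinearMap.mkContinuous
    { toFun := fun v => starRingEnd ℂ (L (conjVec v))
      map_add' := fun a b => by
        show starRingEnd ℂ (L (conjVec (a + b))) = _
        rw [conjVec_add, map_add, map_add]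
      map_smul' := fun c v => by
        show starRingEnd ℂ (L (conjVec (c • v))) = _
        rw [conjVec_smul, map_smul, smul_eq_mul, map_mul, Complex.conj_conj]
        rfl }
    ‖L‖ fun v => by
      simp only [LinearMap.coe_mk, AddHom.coe_mk, RCLike.norm_conj]
      calc ‖L (conjVec v)‖ ≤ ‖L‖ * ‖conjVec v‖ := L.le_opNorm _
      _ = ‖L‖ * ‖v‖ := by rw [norm_conjVec]

lemma conjCLM_apply (L : EuclideanSpace ℂ (Fin n) →L[ℂ] ℂ) (v : EuclideanSpace ℂ (Fin n)) :
    conjCLM L v = starRingEnd ℂ (L (conjVec v)) := rfl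

lemma hasFDerivAt_conj_comp {u : EuclideanSpace ℂ (Fin n) → ℂ}
    {L : EuclideanSpace ℂ (Fin n) →L[ℂ] ℂ} {w₀ : EuclideanSpace ℂ (Fin n)}
    (hu : HasFDerivAt u L (conjVec w₀)) :
    HasFDerivAt (fun w => starRingEnd ℂ (u (conjVec w))) (conjCLM L) w₀ := by
  rw [hasFDerivAt_iff_isLittleO_nhds_zero] at hu ⊢
  have htend : Filter.Tendsto (conjVec : EuclideanSpace ℂ (Fin n) → _) (nhds 0) (nhds 0) := by
    simpa [conjVec_zero] using (continuous_conjVec (n := n)).tendsto 0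
  have hu' := hu.comp_tendsto htend
  rw [Asymptotics.isLittleO_iff] at hu' ⊢
  intro c hc
  filter_upwards [hu' hc] with h hh
  have e1 : conjVec (w₀ + h) = conjVec w₀ + conjVec h := conjVec_add _ _
  calc ‖starRingEnd ℂ (u (conjVec (w₀ + h))) - starRingEnd ℂ (u (conjVec w₀)) - conjCLM L h‖
      = ‖starRingEnd ℂ (u (conjVec w₀ + conjVec h) - u (conjVec w₀) - L (conjVec h))‖ := by
        rw [map_sub, map_sub, conjCLM_apply, e1]
  _ = ‖u (conjVec w₀ + conjVec h) - u (conjVec w₀) - L (conjVec h)‖ := RCLike.norm_conj _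
  _ ≤ c * ‖conjVec h‖ := by simpa using hh
  _ = c * ‖h‖ := by rw [norm_conjVec]

lemma differentiableOn_conj_comp {u : EuclideanSpace ℂ (Fin n) → ℂ}
    {Ω : Set (EuclideanSpace ℂ (Fin n))} (hΩ : IsOpen Ω) (hu : DifferentiableOn ℂ u Ω) :
    DifferentiableOn ℂ (fun w => starRingEnd ℂ (u (conjVec w))) {w | conjVec w ∈ Ω} := by
  intro w hw
  have hz : conjVec w ∈ Ω := hw
  have h1 : HasFDerivAt u (fderiv ℂ u (conjVec w)) (conjVec w) :=
    (hu.differentiableAt (hΩ.mem_nhds hz)).hasFDerivAt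
  exact ((hasFDerivAt_conj_comp h1).differentiableAt).differentiableWithinAt

end conjv

/-- If `(g_j)` are holomorphic on `Ω ⊆ ℂⁿ` with `Σ |g_j(z)|²` pointwise
convergent and locally bounded, then the functions
`f_j(z,w) = g_j(z)·conj(g_j(w̄))` are holomorphic on `Ω × Ω'`
(where `Ω' = {w : w̄ ∈ Ω}`), the series `Σ f_j` converges uniformly on
compact subsets of `Ω × Ω'` to a holomorphic function `F`, and
`F(z, z̄) = Σ |g_j(z)|²` on `Ω`. -/
theorem diagonal_holomorphic_extension
    (n : ℕ) (Ω : Set (EuclideanSpace ℂ (Fin n))) (hΩ : IsOpen Ω)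
    (g : ℕ → EuclideanSpace ℂ (Fin n) → ℂ)
    (hg : ∀ j, DifferentiableOn ℂ (g j) Ω)
    (hsum : ∀ z ∈ Ω, Summable fun j => ‖g j z‖ ^ 2)
    (hbdd : ∀ K ⊆ Ω, IsCompact K → ∃ C : ℝ, ∀ z ∈ K, ∑' j, ‖g j z‖ ^ 2 ≤ C) :
    ∃ F : EuclideanSpace ℂ (Fin n) × EuclideanSpace ℂ (Fin n) → ℂ,
      (∀ j, DifferentiableOn ℂ
        (fun p : EuclideanSpace ℂ (Fin n) × EuclideanSpace ℂ (Fin n) =>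
          g j p.1 * starRingEnd ℂ (g j (conjVec p.2)))
        (Ω ×ˢ {w | conjVec w ∈ Ω})) ∧
      (∀ K ⊆ Ω ×ˢ {w | conjVec w ∈ Ω}, IsCompact K →
        TendstoUniformlyOn
          (fun N p => ∑ j ∈ Finset.range N,
            g j p.1 * starRingEnd ℂ (g j (conjVec p.2)))
          F atTop K) ∧
      DifferentiableOn ℂ F (Ω ×ˢ {w | conjVec w ∈ Ω}) ∧
      ∀ z ∈ Ω, F (z, conjVec z) = ((∑' j, ‖g j z‖ ^ 2 : ℝ) : ℂ) := by
  classical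
  set Ω' : Set (EuclideanSpace ℂ (Fin n)) := {w | conjVec w ∈ Ω} with hΩ'def
  set D : Set (EuclideanSpace ℂ (Fin n) × EuclideanSpace ℂ (Fin n)) := Ω ×ˢ Ω' with hDdef
  have hΩ'open : IsOpen Ω' := hΩ.preimage continuous_conjVec
  have hD : IsOpen D := hΩ.prod hΩ'open
  set fj : ℕ → EuclideanSpace ℂ (Fin n) × EuclideanSpace ℂ (Fin n) → ℂ := fun j p => g j p.1 * starRingEnd ℂ (g j (conjVec p.2)) with hfjdef
  set S : ℕ → EuclideanSpace ℂ (Fin n) × EuclideanSpace ℂ (Fin n) → ℂ := fun N p => ∑ j ∈ Finset.range N, fj j p with hSdef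
  set F : EuclideanSpace ℂ (Fin n) × EuclideanSpace ℂ (Fin n) → ℂ := fun p => ∑' j, fj j p with hFdef
  -- each fj is holomorphic on D
  have hconj : ∀ j, DifferentiableOn ℂ
      (fun w => starRingEnd ℂ (g j (conjVec w))) Ω' :=
    fun j => differentiableOn_conj_comp hΩ (hg j)
  have hfj : ∀ j, DifferentiableOn ℂ (fj j) D := by
    intro j p hp
    have h1 : DifferentiableAt ℂ (fun q : EuclideanSpace ℂ (Fin n) × EuclideanSpace ℂ (Fin n) =>
        g j q.1) p :=
      ((hg j).differentiableAt (hΩ.mem_nhds hp.1)).comp p differentiableAt_fst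
    have h2 : DifferentiableAt ℂ (fun w => starRingEnd ℂ (g j (conjVec w))) p.2 :=
      (hconj j).differentiableAt (hΩ'open.mem_nhds hp.2)
    exact (h1.mul (h2.comp p differentiableAt_snd)).differentiableWithinAt
  have hSdiff : ∀ N, DifferentiableOn ℂ (S N) D :=
    fun N => DifferentiableOn.fun_sum fun j _ => hfj j
  -- norm bound on each term
  have hterm : ∀ j, ∀ p : EuclideanSpace ℂ (Fin n) × EuclideanSpace ℂ (Fin n),
      ‖fj j p‖ ≤ (‖g j p.1‖ ^ 2 + ‖g j (conjVec p.2)‖ ^ 2) / 2 := by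
    intro j p
    have : ‖fj j p‖ = ‖g j p.1‖ * ‖g j (conjVec p.2)‖ := by
      rw [hfjdef]
      simp only [norm_mul, RCLike.norm_conj]
    rw [this]
    nlinarith [two_mul_le_add_sq ‖g j p.1‖ ‖g j (conjVec p.2)‖]
  -- summability on D
  have hsummable : ∀ p ∈ D, Summable fun j => fj j p := by
    intro p hp
    exact Summable.of_norm_bounded
      (((hsum p.1 hp.1).add (hsum (conjVec p.2) hp.2)).div_const 2) (fun j => hterm j p)
  have hpt : ∀ p ∈ D, Filter.Tendsto (fun N => S N p) atTop (nhds (F p)) :=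
    fun p hp => (hsummable p hp).hasSum.tendsto_sum_nat
  -- uniform bound for partial sums on compact subsets of D
  have hSbound : ∀ L ⊆ D, IsCompact L → ∃ C : ℝ, 0 ≤ C ∧ ∀ N, ∀ p ∈ L, ‖S N p‖ ≤ C := by
    intro L hL hLc
    obtain ⟨C1, hC1⟩ := hbdd (Prod.fst '' L)
      (by rintro _ ⟨p, hp, rfl⟩; exact (hL hp).1) (hLc.image continuous_fst)
    obtain ⟨C2, hC2⟩ := hbdd ((fun p : EuclideanSpace ℂ (Fin n) × EuclideanSpace ℂ (Fin n) =>
        conjVec p.2) '' L)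
      (by rintro _ ⟨p, hp, rfl⟩; exact (hL hp).2) (hLc.image (continuous_conjVec.comp continuous_snd))
    refine ⟨max ((C1 + C2) / 2) 0, le_max_right _ _, ?_⟩
    intro N p hp
    have hpD := hL hp
    have hb1 : ∑ j ∈ Finset.range N, ‖g j p.1‖ ^ 2 ≤ C1 :=
      le_trans (Summable.sum_le_tsum _ (fun j _ => sq_nonneg _) (hsum p.1 hpD.1)) (hC1 _ ⟨p, hp, rfl⟩)
    have hb2 : ∑ j ∈ Finset.range N, ‖g j (conjVec p.2)‖ ^ 2 ≤ C2 :=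
      le_trans (Summable.sum_le_tsum _ (fun j _ => sq_nonneg _) (hsum (conjVec p.2) hpD.2))
        (hC2 _ ⟨p, hp, rfl⟩)
    calc ‖S N p‖ ≤ ∑ j ∈ Finset.range N, ‖fj j p‖ := norm_sum_le _ _
    _ ≤ ∑ j ∈ Finset.range N, (‖g j p.1‖ ^ 2 + ‖g j (conjVec p.2)‖ ^ 2) / 2 :=
        Finset.sum_le_sum fun j _ => hterm j p
    _ = ((∑ j ∈ Finset.range N, ‖g j p.1‖ ^ 2) +
          ∑ j ∈ Finset.range N, ‖g j (conjVec p.2)‖ ^ 2) / 2 := by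
        rw [← Finset.sum_add_distrib, Finset.sum_div]
    _ ≤ (C1 + C2) / 2 := by linarith
    _ ≤ max ((C1 + C2) / 2) 0 := le_max_left _ _
  -- uniform convergence on compact subsets of D
  have huc : ∀ K ⊆ D, IsCompact K → TendstoUniformlyOn S F atTop K := by
    intro K hK hKc
    rw [Metric.tendstoUniformlyOn_iff]
    intro ε hε
    have hloc : ∀ x ∈ K, ∃ δ > 0, ∀ y ∈ ball x δ,
        (∀ N, ‖S N y - S N x‖ ≤ ε / 4) ∧ ‖F y - F x‖ ≤ ε / 4 := by
      intro x hx
      obtain ⟨ρ, hρpos, hρ⟩ := Metric.isOpen_iff.mp hD x (hK hx)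
      have hrpos : 0 < ρ / 4 := by positivity
      set r := ρ / 4 with hrdef
      have hball2 : ball x (2 * r) ⊆ D := by
        intro y hy
        rw [mem_ball] at hy
        exact hρ (by rw [mem_ball]; rw [hrdef] at hy; linarith)
      have hcb : closedBall x (2 * r) ⊆ D := by
        intro y hy
        rw [mem_closedBall] at hy
        exact hρ (by rw [mem_ball]; rw [hrdef] at hy; linarith)
      obtain ⟨C, hC0, hC⟩ := hSbound (closedBall x (2 * r)) hcb (isCompact_closedBall _ _)
      have hδpos : 0 < min r ((ε / 4) * (2 * r) / (2 * C + 1)) := lt_min hrpos (by positivity)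
      set δ := min r ((ε / 4) * (2 * r) / (2 * C + 1)) with hδdef
      refine ⟨δ, hδpos, ?_⟩
      intro y hy
      have hyball : y ∈ ball x (2 * r) := by
        rw [mem_ball] at hy ⊢
        calc dist y x < δ := hy
        _ ≤ r := min_le_left _ _
        _ < 2 * r := by linarith
      have hS1 : ∀ N, ‖S N y - S N x‖ ≤ ε / 4 := by
        intro N
        have hsch := schwarz_dist (c := x) (R := 2 * r) (by positivity) hC0
          ((hSdiff N).mono hball2) (fun q hq => hC N q (ball_subset_closedBall hq)) hyball
        refine hsch.trans ?_
        have hyx : ‖y - x‖ ≤ δ := by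
          rw [← dist_eq_norm]; exact (mem_ball.mp hy).le
        calc (2 * C + 1) / (2 * r) * ‖y - x‖ ≤ (2 * C + 1) / (2 * r) * δ :=
              mul_le_mul_of_nonneg_left hyx (by positivity)
        _ ≤ (2 * C + 1) / (2 * r) * ((ε / 4) * (2 * r) / (2 * C + 1)) :=
              mul_le_mul_of_nonneg_left (min_le_right _ _) (by positivity)
        _ = ε / 4 := by
              field_simp
      refine ⟨hS1, ?_⟩
      have hyD : y ∈ D := hball2 hyball
      have hxD : x ∈ D := hK hx
      have htend : Filter.Tendsto (fun N => ‖S N y - S N x‖) atTop (nhds ‖F y - F x‖) :=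
        ((hpt y hyD).sub (hpt x hxD)).norm
      exact le_of_tendsto htend (Filter.Eventually.of_forall hS1)
    choose! δ hδpos hδ using hloc
    obtain ⟨t, htK, htcov⟩ := hKc.elim_nhds_subcover (fun x => ball x (δ x)) fun x hx =>
      ball_mem_nhds x (hδpos x hx)
    have hfin : ∀ᶠ N in atTop, ∀ x ∈ t, dist (F x) (S N x) < ε / 4 := by
      rw [Filter.eventually_all_finset]
      intro x hxt
      have hconv := (hpt x (hK (htK x hxt))).eventually
        (Metric.ball_mem_nhds (F x) (by positivity : (0:ℝ) < ε / 4))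
      filter_upwards [hconv] with N hN
      rw [dist_comm]
      exact hN
    filter_upwards [hfin] with N hN p hp
    obtain ⟨x, hxt, hpx⟩ := Set.mem_iUnion₂.mp (htcov hp)
    have h1 := (hδ x (htK x hxt) p hpx).1 N
    have h2 := (hδ x (htK x hxt) p hpx).2
    have h3 := hN x hxt
    have h1' : dist (S N x) (S N p) ≤ ε / 4 := by
      rw [dist_eq_norm, norm_sub_rev]; exact h1
    have h2' : dist (F p) (F x) ≤ ε / 4 := by
      rw [dist_eq_norm]; exact h2
    calc dist (F p) (S N p) ≤ dist (F p) (F x) + dist (F x) (S N x) + dist (S N x) (S N p) :=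
          dist_triangle4 _ _ _ _
    _ < ε / 4 + ε / 4 + ε / 4 := by linarith
    _ < ε := by linarith
  -- uniform Cauchy property of the derivatives on compact subsets
  have hUCC : ∀ K ⊆ D, IsCompact K →
      UniformCauchySeqOn (fun N p => fderiv ℂ (S N) p) atTop K := by
    intro K hK hKc
    rw [Metric.uniformCauchySeqOn_iff]
    intro ε hε
    have hloc : ∀ x ∈ K, ∃ δ > 0, ∃ N0 : ℕ, ∀ m ≥ N0, ∀ k ≥ N0,
        ∀ p ∈ ball x δ, dist (fderiv ℂ (S m) p) (fderiv ℂ (S k) p) < ε := by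
      intro x hx
      obtain ⟨ρ, hρpos, hρ⟩ := Metric.isOpen_iff.mp hD x (hK hx)
      have hrpos : 0 < ρ / 4 := by positivity
      set r := ρ / 4 with hrdef
      have hcb : closedBall x (2 * r) ⊆ D := by
        intro y hy
        rw [mem_closedBall] at hy
        exact hρ (by rw [mem_ball]; rw [hrdef] at hy; linarith)
      have hucS := (huc _ hcb (isCompact_closedBall _ _)).uniformCauchySeqOn
      rw [Metric.uniformCauchySeqOn_iff] at hucS
      obtain ⟨N0, hN0⟩ := hucS (ε * r / 4) (by positivity)
      refine ⟨r, hrpos, N0, ?_⟩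
      intro m hm k hk p hp
      have hbp : ball p r ⊆ closedBall x (2 * r) := by
        intro y hy
        rw [mem_closedBall]
        calc dist y x ≤ dist y p + dist p x := dist_triangle _ _ _
        _ ≤ r + r := add_le_add (mem_ball.mp hy).le (mem_ball.mp hp).le
        _ = 2 * r := by ring
      have hpD : p ∈ D := hcb (hbp (mem_ball_self hrpos))
      have hdm : DifferentiableOn ℂ (fun y => S m y - S k y) (ball p r) :=
        ((hSdiff m).mono (hbp.trans hcb)).sub ((hSdiff k).mono (hbp.trans hcb))
      have hbb : ∀ y ∈ ball p r, ‖S m y - S k y‖ ≤ ε * r / 4 := by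
        intro y hy
        have hdd := hN0 m hm k hk y (hbp hy)
        rw [dist_eq_norm] at hdd
        exact hdd.le
      have hkey := schwarz_fderiv hrpos (by positivity : (0:ℝ) < ε * r / 4) hdm hbb
      have hdiffm : DifferentiableAt ℂ (S m) p := (hSdiff m).differentiableAt (hD.mem_nhds hpD)
      have hdiffk : DifferentiableAt ℂ (S k) p := (hSdiff k).differentiableAt (hD.mem_nhds hpD)
      have hfd : fderiv ℂ (fun y => S m y - S k y) p = fderiv ℂ (S m) p - fderiv ℂ (S k) p :=
        fderiv_sub hdiffm hdiffk
      rw [dist_eq_norm, ← hfd]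
      calc ‖fderiv ℂ (fun y => S m y - S k y) p‖ ≤ 3 * (ε * r / 4) / r := hkey
      _ = 3 * ε / 4 := by
          field_simp
      _ < ε := by linarith
    choose! δ hδpos N0 hN0 using hloc
    obtain ⟨t, htK, htcov⟩ := hKc.elim_nhds_subcover (fun x => ball x (δ x)) fun x hx =>
      ball_mem_nhds x (hδpos x hx)
    refine ⟨t.sup N0, ?_⟩
    intro m hm k hk p hp
    obtain ⟨x, hxt, hpx⟩ := Set.mem_iUnion₂.mp (htcov hp)
    exact hN0 x (htK x hxt) m (le_trans (Finset.le_sup hxt) hm) k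
      (le_trans (Finset.le_sup hxt) hk) p hpx
  -- pointwise limits of the derivatives
  have hG' : ∀ p : EuclideanSpace ℂ (Fin n) × EuclideanSpace ℂ (Fin n),
      ∃ Lp : (EuclideanSpace ℂ (Fin n) × EuclideanSpace ℂ (Fin n)) →L[ℂ] ℂ,
      p ∈ D → Filter.Tendsto (fun N => fderiv ℂ (S N) p) atTop (nhds Lp) := by
    intro p
    by_cases hp : p ∈ D
    · have hc : CauchySeq (fun N => fderiv ℂ (S N) p) := by
        have h1 := hUCC {p} (Set.singleton_subset_iff.mpr hp) isCompact_singleton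
        rw [Metric.uniformCauchySeqOn_iff] at h1
        rw [Metric.cauchySeq_iff]
        intro ε hε
        obtain ⟨N0, hN0⟩ := h1 ε hε
        exact ⟨N0, fun m hm k hk => hN0 m hm k hk p rfl⟩
      obtain ⟨L0, hL0⟩ := cauchySeq_tendsto_of_complete hc
      exact ⟨L0, fun _ => hL0⟩
    · exact ⟨0, fun h => absurd h hp⟩
  choose G' hG' using hG'
  have h'tlu : TendstoLocallyUniformlyOn (fun N p => fderiv ℂ (S N) p) G' atTop D := by
    rw [tendstoLocallyUniformlyOn_iff_forall_isCompact hD]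
    intro K hK hKc
    exact (hUCC K hK hKc).tendstoUniformlyOn_of_tendsto fun p hp => hG' p (hK hp)
  have hFdiff : DifferentiableOn ℂ F D := by
    intro x hx
    have := hasFDerivAt_of_tendsto_locally_uniformly_on' hD h'tlu hSdiff
      (fun p hp => hpt p hp) hx
    exact this.differentiableAt.differentiableWithinAt
  refine ⟨F, hfj, huc, hFdiff, ?_⟩
  intro z hz
  have hzz : conjVec (conjVec z) = z := conjVec_conjVec z
  have hFz : F (z, conjVec z) = ∑' j, ((‖g j z‖ ^ 2 : ℝ) : ℂ) := by
    rw [hFdef]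
    simp only [hfjdef, hzz]
    refine tsum_congr fun j => ?_
    rw [Complex.mul_conj']
    norm_cast
  rw [hFz]
  exact (Complex.ofRealCLM.map_tsum (hsum z hz)).symm
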